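/- arXiv:2401.11917 — 4 statements merged into one kernel-verified Lean document; each statement's English description precedes it below -/
import Mathlib

section
/- Let Φ⁰ : C⁰ → ℂ[[z]] × ℂ[[z]] be the ℂ-linear map f ↦ (f(0), f(1)) (evaluations of the polynomial f at v = 0 and v = 1, which lie in P = ℂ[[z]]), and let Φ¹ : C¹ → ℂ((z)) be F ↦ ∫₀¹F. Let δ : ℂ[[z]] × ℂ[[z]] → ℂ((z)) be δ(g,h) = h − g (the Čech differential of the two-disc cover of the formal raviolo). Then (Φ⁰, Φ¹) is a quasi-isomorphism of two-term complexes from (C⁰ →d C¹) to (ℂ[[z]] × ℂ[[z]] →δ ℂ((z))): one has Φ¹(d f) = δ(Φ⁰ f) for all f ∈ C⁰; Φ⁰ restricts to a ℂ-linear bijection from ker d onto ker δ; and Φ¹ induces a ℂ-linear bijection C¹/d(C⁰) → ℂ((z))/δ(ℂ[[z]] × ℂ[[z]]). (This realizes the identification of ℂ{{z}} with the derived global sections RΓ(Rav, O) of the structure sheaf of the formal raviolo, computed by the Čech complex of its cover by two formal discs.) -/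
/-!
Model of `ℂ{{z}}`, the dg algebra of derived functions on the formal raviolo,
as the two-term complex `d : C⁰ → C¹` with
`C⁰ = {f ∈ ℂ((z))[v] : f(0), f(1) ∈ ℂ[[z]]}`, `C¹ = ℂ((z))[v]`, `d f = f′`,
together with the Čech complex `ℂ[[z]] × ℂ[[z]] → ℂ((z)), (g,h) ↦ h - g`
of the two-disc cover of the formal raviolo.
-/

noncomputable section

open Polynomial

/-- Membership in `ℂ[[z]] ⊆ ℂ((z))`: all coefficients in strictly negative degrees vanish. -/
def inP (x : LaurentSeries ℂ) : Prop := ∀ n : ℤ, n < 0 → x.coeff n = 0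

/-- `∫₀¹ F` for a polynomial `F = Σ_k F_k v^k` with Laurent series coefficients:
`Σ_k F_k / (k+1)`. -/
def intg (F : Polynomial (LaurentSeries ℂ)) : LaurentSeries ℂ :=
  ∑ k ∈ Finset.range (F.natDegree + 1), F.coeff k / ((k : LaurentSeries ℂ) + 1)


local notation "L" => LaurentSeries ℂ

instance : CharZero L := charZero_of_injective_algebraMap (algebraMap ℂ L).injective

lemma intg_eq (F : Polynomial L) {N : ℕ} (h : F.natDegree < N) :
    intg F = ∑ k ∈ Finset.range N, F.coeff k / ((k : L) + 1) := by
  unfold intg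
  apply Finset.sum_subset
  · intro x hx; simp only [Finset.mem_range] at hx ⊢; omega
  · intro x _ hx
    simp only [Finset.mem_range, not_lt] at hx
    rw [coeff_eq_zero_of_natDegree_lt (by omega), zero_div]

lemma intg_sub (F G : Polynomial L) : intg (F - G) = intg F - intg G := by
  set N := max F.natDegree G.natDegree + 1 with hN
  have h1 : F.natDegree < N := by omega
  have h2 : G.natDegree < N := by omega
  have h3 : (F - G).natDegree < N :=
    lt_of_le_of_lt (Polynomial.natDegree_sub_le F G) (by omega)
  rw [intg_eq F h1, intg_eq G h2, intg_eq (F - G) h3, ← Finset.sum_sub_distrib]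
  refine Finset.sum_congr rfl fun k _ => ?_
  rw [coeff_sub, sub_div]

lemma intg_derivative (f : Polynomial L) :
    intg (derivative f) = f.eval 1 - f.eval 0 := by
  have hd : (derivative f).natDegree < f.natDegree + 1 :=
    lt_of_le_of_lt (natDegree_derivative_le f) (by omega)
  rw [intg_eq _ hd]
  have he1 : f.eval 1 = ∑ i ∈ Finset.range (f.natDegree + 2), f.coeff i := by
    rw [eval_eq_sum_range' (show f.natDegree < f.natDegree + 2 by omega)]; simp
  have he0 : f.eval 0 = f.coeff 0 := (coeff_zero_eq_eval_zero f).symm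
  have : ∀ k ∈ Finset.range (f.natDegree + 1),
      (derivative f).coeff k / ((k : L) + 1) = f.coeff (k + 1) := by
    intro k _
    rw [coeff_derivative, mul_div_assoc, div_self (Nat.cast_add_one_ne_zero k),
      mul_one]
  rw [Finset.sum_congr rfl this, he1, he0, Finset.sum_range_succ' (fun i => f.coeff i)]
  ring

/-- antiderivative with constant term `c` -/
def antid (H : Polynomial L) (c : L) : Polynomial L :=
  C c + ∑ k ∈ Finset.range (H.natDegree + 1), C (H.coeff k / ((k : L) + 1)) * X ^ (k + 1)

lemma antid_deriv (H : Polynomial L) (c : L) : derivative (antid H c) = H := by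
  unfold antid
  rw [derivative_add, derivative_C, zero_add, derivative_sum]
  have : ∀ k ∈ Finset.range (H.natDegree + 1),
      derivative (C (H.coeff k / ((k : L) + 1)) * X ^ (k + 1))
        = C (H.coeff k) * X ^ k := by
    intro k _
    rw [derivative_C_mul_X_pow, Nat.add_sub_cancel]
    congr 1
    rw [Nat.cast_add, Nat.cast_one, div_mul_cancel₀ _ (Nat.cast_add_one_ne_zero k)]
  rw [Finset.sum_congr rfl this]
  conv_rhs => rw [H.as_sum_range]
  exact Finset.sum_congr rfl fun k _ => C_mul_X_pow_eq_monomial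

lemma antid_eval0 (H : Polynomial L) (c : L) : (antid H c).eval 0 = c := by
  unfold antid
  simp [eval_finset_sum]

lemma antid_eval1 (H : Polynomial L) (c : L) : (antid H c).eval 1 = c + intg H := by
  unfold antid
  rw [eval_add, eval_C, eval_finset_sum]
  congr 1
  unfold intg
  exact Finset.sum_congr rfl fun k _ => by simp

/-- The pair `(Φ⁰, Φ¹)`, with `Φ⁰ f = (f(0), f(1))` and `Φ¹ F = ∫₀¹ F`, is a
quasi-isomorphism of two-term complexes from `(C⁰ →d C¹)` to
`(ℂ[[z]] × ℂ[[z]] →δ ℂ((z)))` where `δ(g,h) = h - g`: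
it is a cochain map, `Φ⁰` restricts to a bijection `ker d → ker δ`, and `Φ¹` induces
a bijection `C¹/d(C⁰) → ℂ((z))/δ(ℂ[[z]] × ℂ[[z]])`. -/
theorem raviolo_cech_quasiIso :
    -- (a) cochain map: Φ¹(d f) = δ(Φ⁰ f) for f ∈ C⁰
    (∀ f : Polynomial (LaurentSeries ℂ), inP (f.eval 0) → inP (f.eval 1) →
        intg (derivative f) = f.eval 1 - f.eval 0)
    -- (b) Φ⁰ restricts to a bijection from ker d ⊆ C⁰ onto ker δ: injectivity …
    ∧ (∀ f g : Polynomial (LaurentSeries ℂ),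
        inP (f.eval 0) → inP (f.eval 1) → derivative f = 0 →
        inP (g.eval 0) → inP (g.eval 1) → derivative g = 0 →
        f.eval 0 = g.eval 0 → f.eval 1 = g.eval 1 → f = g)
    -- … and surjectivity onto ker δ = {(g,h) : h - g = 0}
    ∧ (∀ g h : LaurentSeries ℂ, inP g → inP h → h - g = 0 →
        ∃ f : Polynomial (LaurentSeries ℂ), inP (f.eval 0) ∧ inP (f.eval 1) ∧
          derivative f = 0 ∧ f.eval 0 = g ∧ f.eval 1 = h)
    -- (c) Φ¹ induces a bijection C¹/d(C⁰) → ℂ((z))/δ(ℂ[[z]]×ℂ[[z]]): well-definedness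
    -- and injectivity of the induced map …
    ∧ (∀ F G : Polynomial (LaurentSeries ℂ),
        (∃ g h : LaurentSeries ℂ, inP g ∧ inP h ∧ intg F - intg G = h - g) ↔
        (∃ f : Polynomial (LaurentSeries ℂ), inP (f.eval 0) ∧ inP (f.eval 1) ∧
          F - G = derivative f))
    -- … and surjectivity of the induced map
    ∧ (∀ y : LaurentSeries ℂ, ∃ (F : Polynomial (LaurentSeries ℂ)) (g h : LaurentSeries ℂ),
        inP g ∧ inP h ∧ y = intg F + (h - g)) := by
  refine ⟨fun f _ _ => intg_derivative f, ?_, ?_, ?_, ?_⟩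
  · intro f g _ _ hf _ _ hg h0 _
    rw [eq_C_of_derivative_eq_zero hf, eq_C_of_derivative_eq_zero hg,
      coeff_zero_eq_eval_zero, coeff_zero_eq_eval_zero, h0]
  · intro g h hg hh hgh
    have : h = g := by linear_combination hgh
    exact ⟨C g, by simpa using hg, by simpa using hg, derivative_C, by simp, by simp [this]⟩
  · intro F G
    constructor
    · rintro ⟨g, h, hg, hh, heq⟩
      refine ⟨antid (F - G) g, ?_, ?_, (antid_deriv _ _).symm⟩
      · rw [antid_eval0]; exact hg
      · rw [antid_eval1, intg_sub, heq]
        simpa using hh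
    · rintro ⟨f, h0, h1, hf⟩
      exact ⟨f.eval 0, f.eval 1, h0, h1, by rw [← intg_sub, hf, intg_derivative]⟩
  · intro y
    refine ⟨C y, 0, 0, fun n _ => rfl, fun n _ => rfl, ?_⟩
    simp [intg]

end
end

section
/- An element f ∈ C⁰ satisfies d f = 0 if and only if f is a constant polynomial in v whose value lies in ℂ[[z]]. Consequently the ℂ-linear map ℂ[[z]] → ker(d : C⁰ → C¹) sending a power series g to the constant polynomial g is a bijection; that is, H⁰(ℂ{{z}}) ≅ ℂ[[z]] as ℂ-vector spaces. -/
/-!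
`H⁰(ℂ{{z}}) ≅ ℂ[[z]]`: the kernel of `d : C⁰ → C¹` consists exactly of the constant
polynomials with value in `ℂ[[z]]`.
-/

noncomputable section

open Polynomial

/-- An element `f ∈ C⁰` satisfies `d f = 0` iff `f` is a constant polynomial whose value
lies in `ℂ[[z]]`; consequently the map `ℂ[[z]] → ker (d : C⁰ → C¹)`, `g ↦ C g`, is a
bijection, i.e. `H⁰(ℂ{{z}}) ≅ ℂ[[z]]`. -/
theorem raviolo_H0 :
    (∀ f : Polynomial (LaurentSeries ℂ), inP (f.eval 0) → inP (f.eval 1) →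
      (derivative f = 0 ↔ ∃ g : LaurentSeries ℂ, inP g ∧ f = C g))
    ∧ Function.Bijective
        (fun g : {g : LaurentSeries ℂ // inP g} =>
          (⟨C g.1, ⟨⟨by simpa using g.2, by simpa using g.2⟩, by simp⟩⟩ :
            {f : Polynomial (LaurentSeries ℂ) //
              (inP (f.eval 0) ∧ inP (f.eval 1)) ∧ derivative f = 0})) := by
  haveI : CharZero (LaurentSeries ℂ) := charZero_of_injective_algebraMap (algebraMap ℂ (LaurentSeries ℂ)).injective
  constructor
  · intro f h0 _
    constructor
    · intro hd
      have hn : f.natDegree = 0 := natDegree_eq_zero_of_derivative_eq_zero hd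
      obtain ⟨a, ha⟩ := natDegree_eq_zero.mp hn
      refine ⟨a, ?_, ha.symm⟩
      have : f.eval 0 = a := by rw [← ha]; simp
      rwa [this] at h0
    · rintro ⟨g, _, rfl⟩
      simp
  · constructor
    · rintro ⟨g, hg⟩ ⟨g', hg'⟩ h
      have := congrArg (fun x => x.1.coeff 0) h
      simp at this
      exact Subtype.ext this
    · rintro ⟨f, ⟨h0, h1⟩, hd⟩
      have hn : f.natDegree = 0 := natDegree_eq_zero_of_derivative_eq_zero hd
      obtain ⟨a, ha⟩ := natDegree_eq_zero.mp hn
      have heval : f.eval 0 = a := by rw [← ha]; simp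
      refine ⟨⟨a, by rwa [heval] at h0⟩, ?_⟩
      exact Subtype.ext ha
end
end

section
/- Every f ∈ C⁰ can be written uniquely as f = f₋ + f₊ where f₊ ∈ P[v] (all coefficients of f₊ are power series) and f₋ ∈ Q[v] with f₋(0) = 0 and f₋(1) = 0 (all coefficients of f₋ are supported in strictly negative powers of z and the evaluations of f₋ at v = 0 and v = 1 vanish). Together with the coefficientwise Laurent splitting in degree one, this gives the decomposition of dg vector spaces ℂ{{z}} = ℂ{{z}}₋ ⊕ ℂ{{z}}₊. -/
/-!
The splitting `ℂ{{z}} = ℂ{{z}}₋ ⊕ ℂ{{z}}₊` as dg vector spaces: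
in degree zero every `f ∈ C⁰` decomposes uniquely as `f = f₋ + f₊` with `f₊ ∈ ℂ[[z]][v]`
and `f₋ ∈ (z⁻¹ℂ[z⁻¹])[v]` with `f₋(0) = f₋(1) = 0`; in degree one every `F ∈ ℂ((z))[v]`
decomposes uniquely coefficientwise.
-/

noncomputable section

open Polynomial

/-- Membership in `z⁻¹ℂ[z⁻¹] ⊆ ℂ((z))`. -/
def inQ (x : LaurentSeries ℂ) : Prop := ∀ n : ℤ, 0 ≤ n → x.coeff n = 0

def lsNeg (x : LaurentSeries ℂ) : LaurentSeries ℂ :=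
  ⟨fun n => if n < 0 then x.coeff n else 0,
   (x.isPWO_support).mono (by
      intro n hn
      simp only [Function.mem_support] at hn ⊢
      intro h
      apply hn
      simp [h])⟩

@[simp] lemma lsNeg_coeff (x : LaurentSeries ℂ) (n : ℤ) :
    (lsNeg x).coeff n = if n < 0 then x.coeff n else 0 := rfl

lemma lsNeg_zero : lsNeg 0 = 0 := by
  apply HahnSeries.ext
  funext n
  simp

lemma lsNeg_add (x y : LaurentSeries ℂ) :
    lsNeg (x + y) = lsNeg x + lsNeg y := by
  apply HahnSeries.ext
  funext n
  simp only [lsNeg_coeff, HahnSeries.coeff_add]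
  split_ifs <;> simp

def negPoly (f : Polynomial (LaurentSeries ℂ)) : Polynomial (LaurentSeries ℂ) :=
  ⟨AddMonoidAlgebra.ofCoeff (f.toFinsupp.coeff.mapRange lsNeg lsNeg_zero)⟩

@[simp] lemma negPoly_coeff (f : Polynomial (LaurentSeries ℂ)) (k : ℕ) :
    (negPoly f).coeff k = lsNeg (f.coeff k) := rfl

lemma negPoly_add (f g : Polynomial (LaurentSeries ℂ)) :
    negPoly (f + g) = negPoly f + negPoly g := by
  ext k
  simp [lsNeg_add]

lemma negPoly_monomial (n : ℕ) (a : LaurentSeries ℂ) :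
    negPoly (monomial n a) = monomial n (lsNeg a) := by
  ext k
  simp only [negPoly_coeff, coeff_monomial]
  split_ifs <;> simp [lsNeg_zero]

lemma negPoly_eval_one (f : Polynomial (LaurentSeries ℂ)) :
    (negPoly f).eval 1 = lsNeg (f.eval 1) := by
  induction f using Polynomial.induction_on' with
  | add p q hp hq => rw [negPoly_add, eval_add, eval_add, lsNeg_add, hp, hq]
  | monomial n a => rw [negPoly_monomial, eval_monomial, eval_monomial]; simp

lemma negPoly_eval_zero (f : Polynomial (LaurentSeries ℂ)) :
    (negPoly f).eval 0 = lsNeg (f.eval 0) := by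
  rw [← coeff_zero_eq_eval_zero, ← coeff_zero_eq_eval_zero, negPoly_coeff]

lemma lsNeg_of_inP (x : LaurentSeries ℂ) (hx : inP x) : lsNeg x = 0 := by
  apply HahnSeries.ext
  funext n
  simp only [lsNeg_coeff, HahnSeries.coeff_zero]
  split_ifs with h
  · exact hx n h
  · rfl

lemma uniq_neg (F a b : Polynomial (LaurentSeries ℂ)) (hF : F = a + b)
    (ha : ∀ k, inQ (a.coeff k)) (hb : ∀ k, inP (b.coeff k)) : a = negPoly F := by
  ext k n
  have hco : F.coeff k = a.coeff k + b.coeff k := by rw [hF, coeff_add]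
  simp only [negPoly_coeff, lsNeg_coeff]
  split_ifs with h
  · have : (F.coeff k).coeff n = (a.coeff k).coeff n + (b.coeff k).coeff n := by
      rw [hco, HahnSeries.coeff_add]
    rw [this, hb k n h, add_zero]
  · exact ha k n (le_of_not_gt h)

/-- Unique decomposition `ℂ{{z}} = ℂ{{z}}₋ ⊕ ℂ{{z}}₊` in degrees zero and one. -/
theorem raviolo_splitting :
    -- degree 0: every f ∈ C⁰ is uniquely f₋ + f₊ with f₊ ∈ P[v] and
    -- f₋ ∈ Q[v], f₋(0) = f₋(1) = 0
    (∀ f : Polynomial (LaurentSeries ℂ), inP (f.eval 0) → inP (f.eval 1) →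
      ∃! p : Polynomial (LaurentSeries ℂ) × Polynomial (LaurentSeries ℂ),
        f = p.1 + p.2 ∧ (∀ k, inQ (p.1.coeff k)) ∧ p.1.eval 0 = 0 ∧ p.1.eval 1 = 0 ∧
          (∀ k, inP (p.2.coeff k)))
    -- degree 1: coefficientwise Laurent splitting
    ∧ (∀ F : Polynomial (LaurentSeries ℂ),
        ∃! p : Polynomial (LaurentSeries ℂ) × Polynomial (LaurentSeries ℂ),
          F = p.1 + p.2 ∧ (∀ k, inQ (p.1.coeff k)) ∧ (∀ k, inP (p.2.coeff k))) := by

  have hQ : ∀ (F : Polynomial (LaurentSeries ℂ)) k, inQ ((negPoly F).coeff k) := by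
    intro F k n hn
    simp only [negPoly_coeff, lsNeg_coeff]
    rw [if_neg (not_lt.2 hn)]
  have hP : ∀ (F : Polynomial (LaurentSeries ℂ)) k, inP ((F - negPoly F).coeff k) := by
    intro F k n hn
    simp only [coeff_sub, HahnSeries.coeff_sub, negPoly_coeff, lsNeg_coeff, if_pos hn, sub_self]
  have hsum : ∀ F : Polynomial (LaurentSeries ℂ), F = negPoly F + (F - negPoly F) := by
    intro F; ring
  constructor
  · intro f hP0 hP1
    refine ⟨(negPoly f, f - negPoly f),
      ⟨hsum f, hQ f, ?_, ?_, hP f⟩, ?_⟩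
    · rw [negPoly_eval_zero, lsNeg_of_inP _ hP0]
    · rw [negPoly_eval_one, lsNeg_of_inP _ hP1]
    · rintro ⟨a, b⟩ ⟨h1, h2, _, _, h5⟩
      have ha : a = negPoly f := uniq_neg f a b h1 h2 h5
      have hb : b = f - negPoly f := by rw [← ha]; rw [h1]; ring
      exact Prod.ext ha hb
  · intro F
    refine ⟨(negPoly F, F - negPoly F), ⟨hsum F, hQ F, hP F⟩, ?_⟩
    rintro ⟨a, b⟩ ⟨h1, h2, h3⟩
    have ha : a = negPoly F := uniq_neg F a b h1 h2 h3
    have hb : b = F - negPoly F := by rw [← ha]; rw [h1]; ring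
    exact Prod.ext ha hb

end
end

section
/- For every σ ∈ S_N one has P_s(Σ_{τ ∈ π_N^{-1}(σ)} u_τ) = u_σ. In particular P_s(Σ_{τ ∈ S_{N+1}} u_τ) = Σ_{σ ∈ S_N} u_σ, so P_s descends to a map between the coordinate rings of the algebro-geometric simplices Δ¹ × Δ^{N!−1} and Δ^{(N+1)!−1}, and is a left inverse on generators of the map u_σ ↦ Σ_{τ ∈ π_N^{-1}(σ)} u_τ. -/
/-!
The pullback `P_s : ℂ[u_τ : τ ∈ S_{N+1}] → ℂ[v][u_σ : σ ∈ S_N]` (to the curved copy of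
`Δ¹ × Δ^{N!-1}` inside `Δ^{(N+1)!-1}`) satisfies
`P_s(Σ_{τ ∈ π_N⁻¹(σ)} u_τ) = u_σ` for every `σ ∈ S_N`, and in particular
`P_s(Σ_τ u_τ) = Σ_σ u_σ`.
-/

noncomputable section

open scoped Classical

/-- Total orders on `{1,…,n}` are identified with bijections `τ : Fin n ≃ Fin n`,
`τ k` being the `k`-th smallest element. -/
abbrev TotalOrd (n : ℕ) := Equiv.Perm (Fin n)

/-- `a` immediately precedes `b` in `τ`: they occupy consecutive positions `k, k+1`. -/
def immPrec {n : ℕ} (τ : TotalOrd (n + 1)) (a b : Fin (n + 1)) : Prop :=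
  ∃ k : Fin n, τ k.castSucc = a ∧ τ k.succ = b

/-- `π_N : S_{N+1} → S_N`: delete the entry `N+1`, i.e. list the elements of `{1,…,N}` in
the order in which they occur in `τ` (obtained by sorting `Fin N` by position in `τ`). -/
def delLast {N : ℕ} (τ : TotalOrd (N + 1)) : TotalOrd N :=
  Tuple.sort (fun a : Fin N => τ.symm a.castSucc)

/-- The algebra map `P_s : ℂ[u_τ : τ ∈ S_{N+1}] → ℂ[v][u_σ : σ ∈ S_N]` determined by
`u_τ ↦ (1-v)u_{π_N τ}` if `N+1` immediately precedes `s` in `τ`,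
`u_τ ↦ v·u_{π_N τ}` if `s` immediately precedes `N+1` in `τ`, and `u_τ ↦ 0` otherwise. -/
def Ps (N : ℕ) (s : Fin N) :
    MvPolynomial (TotalOrd (N + 1)) ℂ →ₐ[ℂ]
      Polynomial (MvPolynomial (TotalOrd N) ℂ) :=
  MvPolynomial.aeval fun τ : TotalOrd (N + 1) =>
    if immPrec τ (Fin.last N) s.castSucc then
      (1 - Polynomial.X) * Polynomial.C (MvPolynomial.X (delLast τ))
    else if immPrec τ s.castSucc (Fin.last N) then
      Polynomial.X * Polynomial.C (MvPolynomial.X (delLast τ))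
    else 0

/-- Insert the value `last N` at position `j` into the order `σ`. -/
def ins {N : ℕ} (σ : TotalOrd N) (j : Fin (N + 1)) : TotalOrd (N + 1) :=
  ((finSuccEquiv' (Fin.last N)).trans
    ((Equiv.optionCongr σ.symm).trans (finSuccEquiv' j).symm)).symm

@[simp] lemma ins_symm_last {N : ℕ} (σ : TotalOrd N) (j : Fin (N + 1)) :
    (ins σ j).symm (Fin.last N) = j := by
  simp [ins]
  exact finSuccEquiv'_symm_none j

@[simp] lemma ins_symm_castSucc {N : ℕ} (σ : TotalOrd N) (j : Fin (N + 1)) (a : Fin N) :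
    (ins σ j).symm a.castSucc = j.succAbove (σ.symm a) := by
  rw [ins, Equiv.symm_symm]
  simp only [Equiv.trans_apply, Equiv.optionCongr_apply]
  rw [← Fin.succAbove_last_apply a, finSuccEquiv'_succAbove]
  simp

@[simp] lemma delLast_ins {N : ℕ} (σ : TotalOrd N) (j : Fin (N + 1)) :
    delLast (ins σ j) = σ := by
  rw [delLast, eq_comm, Tuple.eq_sort_iff]
  constructor
  · intro a b hab
    simp only [Function.comp_apply, ins_symm_castSucc, Equiv.symm_apply_apply]
    exact (Fin.strictMono_succAbove j).monotone hab
  · intro i k hik h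
    exfalso
    simp only [Function.comp_apply, ins_symm_castSucc, Equiv.symm_apply_apply] at h
    exact hik.ne ((Fin.strictMono_succAbove j).injective h)

lemma ins_inj {N : ℕ} : Function.Injective
    (fun p : TotalOrd N × Fin (N + 1) => ins p.1 p.2) := by
  rintro ⟨σ, j⟩ ⟨σ', j'⟩ h
  simp only at h
  have h1 : σ = σ' := by rw [← delLast_ins σ j, h, delLast_ins]
  have h2 : j = j' := by rw [← ins_symm_last σ j, h, ins_symm_last]
  simp [h1, h2]

lemma ins_surj {N : ℕ} : Function.Surjective
    (fun p : TotalOrd N × Fin (N + 1) => ins p.1 p.2) := by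
  have hcard : Fintype.card (TotalOrd N × Fin (N + 1)) = Fintype.card (TotalOrd (N + 1)) := by
    simp [Fintype.card_perm, Nat.factorial_succ, Nat.mul_comm]
  exact ((Fintype.bijective_iff_injective_and_card _).2 ⟨ins_inj, hcard⟩).2

lemma fiber_eq {N : ℕ} (σ : TotalOrd N) :
    Finset.univ.filter (fun τ => delLast τ = σ) = Finset.univ.image (ins σ) := by
  ext τ
  simp only [Finset.mem_filter, Finset.mem_univ, true_and, Finset.mem_image]
  constructor
  · intro h
    obtain ⟨⟨σ', j⟩, rfl⟩ := ins_surj τ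
    simp only [delLast_ins] at h
    exact ⟨j, by rw [h]⟩
  · rintro ⟨j, rfl⟩
    exact delLast_ins σ j

lemma immPrec_ins_last {N : ℕ} (σ : TotalOrd N) (j : Fin (N + 1)) (s : Fin N) :
    immPrec (ins σ j) (Fin.last N) s.castSucc ↔ j = (σ.symm s).castSucc := by
  constructor
  · rintro ⟨k, hk1, hk2⟩
    have h1 : j = k.castSucc := by
      rw [← ins_symm_last σ j, ← hk1, Equiv.symm_apply_apply]
    have h2 : j.succAbove (σ.symm s) = k.succ := by
      rw [← ins_symm_castSucc σ j s, ← hk2, Equiv.symm_apply_apply]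
    subst h1
    rcases lt_or_ge (σ.symm s).castSucc k.castSucc with h | h
    · exfalso
      rw [Fin.succAbove_of_castSucc_lt _ _ h] at h2
      have hv := congrArg Fin.val h2
      simp only [Fin.coe_castSucc, Fin.val_succ] at hv
      have hv' := Fin.le_def.mp h.le
      simp only [Fin.coe_castSucc] at hv'
      omega
    · rw [Fin.succAbove_of_le_castSucc _ _ h] at h2
      rw [Fin.succ_injective _ h2]
  · rintro rfl
    refine ⟨σ.symm s, ?_, ?_⟩
    · rw [Equiv.apply_eq_iff_eq_symm_apply, ins_symm_last]
    · rw [Equiv.apply_eq_iff_eq_symm_apply, ins_symm_castSucc,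
        Fin.succAbove_of_le_castSucc _ _ le_rfl]

lemma immPrec_ins_succ {N : ℕ} (σ : TotalOrd N) (j : Fin (N + 1)) (s : Fin N) :
    immPrec (ins σ j) s.castSucc (Fin.last N) ↔ j = (σ.symm s).succ := by
  constructor
  · rintro ⟨k, hk1, hk2⟩
    have h1 : j = k.succ := by
      rw [← ins_symm_last σ j, ← hk2, Equiv.symm_apply_apply]
    have h2 : j.succAbove (σ.symm s) = k.castSucc := by
      rw [← ins_symm_castSucc σ j s, ← hk1, Equiv.symm_apply_apply]
    subst h1
    rcases lt_or_ge (σ.symm s).castSucc k.succ with h | h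
    · rw [Fin.succAbove_of_castSucc_lt _ _ h] at h2
      rw [Fin.castSucc_injective _ h2]
    · exfalso
      rw [Fin.succAbove_of_le_castSucc _ _ h] at h2
      have hv := congrArg Fin.val h2
      simp only [Fin.coe_castSucc, Fin.val_succ] at hv
      have hv' := Fin.le_def.mp h
      simp only [Fin.coe_castSucc, Fin.val_succ] at hv'
      omega
  · rintro rfl
    refine ⟨σ.symm s, ?_, ?_⟩
    · rw [Equiv.apply_eq_iff_eq_symm_apply, ins_symm_castSucc,
        Fin.succAbove_of_castSucc_lt _ _ Fin.castSucc_lt_succ]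
    · rw [Equiv.apply_eq_iff_eq_symm_apply, ins_symm_last]

/-- For every `σ ∈ S_N`, `P_s(Σ_{τ ∈ π_N⁻¹(σ)} u_τ) = u_σ`; in particular
`P_s(Σ_{τ ∈ S_{N+1}} u_τ) = Σ_{σ ∈ S_N} u_σ`, so `P_s` descends to the coordinate rings of
the algebro-geometric simplices and is a left inverse on generators of
`u_σ ↦ Σ_{τ ∈ π_N⁻¹(σ)} u_τ`. -/
theorem Ps_section (N : ℕ) (s : Fin N) :
    (∀ σ : TotalOrd N,
      Ps N s (∑ τ ∈ Finset.univ.filter (fun τ => delLast τ = σ), MvPolynomial.X τ)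
        = Polynomial.C (MvPolynomial.X σ))
    ∧ Ps N s (∑ τ : TotalOrd (N + 1), MvPolynomial.X τ)
        = ∑ σ : TotalOrd N, Polynomial.C (MvPolynomial.X σ) := by
  have main : ∀ σ : TotalOrd N,
      Ps N s (∑ τ ∈ Finset.univ.filter (fun τ => delLast τ = σ), MvPolynomial.X τ)
        = Polynomial.C (MvPolynomial.X σ) := by
    intro σ
    rw [map_sum, fiber_eq σ, Finset.sum_image (by
      intro j _ j' _ h
      rw [← ins_symm_last σ j, h, ins_symm_last])]
    have hval : ∀ j : Fin (N + 1), Ps N s (MvPolynomial.X (ins σ j)) =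
        (if j = (σ.symm s).castSucc then
          (1 - Polynomial.X) * Polynomial.C (MvPolynomial.X σ) else 0)
        + (if j = (σ.symm s).succ then
          Polynomial.X * Polynomial.C (MvPolynomial.X σ) else 0) := by
      intro j
      rw [Ps, MvPolynomial.aeval_X]
      simp only [immPrec_ins_last, immPrec_ins_succ, delLast_ins]
      have hne : ((σ.symm s).castSucc : Fin (N+1)) ≠ (σ.symm s).succ :=
        (Fin.castSucc_lt_succ).ne
      split_ifs with h1 h2 <;> simp_all
    rw [Finset.sum_congr rfl (fun j _ => hval j), Finset.sum_add_distrib]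
    simp only [Finset.sum_ite_eq', Finset.mem_univ, if_true]
    ring
  refine ⟨main, ?_⟩
  have := Finset.sum_fiberwise_of_maps_to
    (s := (Finset.univ : Finset (TotalOrd (N + 1)))) (t := (Finset.univ : Finset (TotalOrd N)))
    (g := delLast) (fun _ _ => Finset.mem_univ _)
    (fun τ => MvPolynomial.X (R := ℂ) τ)
  rw [← this, map_sum]
  exact Finset.sum_congr rfl fun σ _ => main σ

end
end
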